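/- The protocol P^∅ is an intersection protocol (satisfies Validity, Safety, and Liveness) and is lexicographically optimal with respect to γ_∅(F) for each adversary model F ∈ {NF, CR, SO}. -/

import Mathlib

open scoped Classical

noncomputable section

namespace Inter

/-- Actions available to each agent. -/
inductive Act where
  | go
  | noop
deriving DecidableEq

/-- A move through the intersection: an incoming lane paired with an outgoing lane. -/
abbrev Move (kin kout : ℕ) := Fin kin × Fin kout

/-- An adversary: a conflict-free arrival schedule, a transmission environment and
transmitter/receiver failure functions. -/
structure Adversary (kin kout : ℕ) where
  arrive : ℕ → ℕ × Fin kin × Fin kout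
  conflictFree : ∀ i j : ℕ, i ≠ j → (arrive i).1 = (arrive j).1 →
    (arrive i).2.1 ≠ (arrive j).2.1
  T : Set ((Fin kin × ℕ) × (Fin kin × ℕ))
  T_front : ∀ l l' : Fin kin, ((l, 0), (l', 0)) ∈ T
  Ft : ℕ → ℕ → Bool
  Fr : ℕ → ℕ → Bool

/-- The lane component of a sensor reading: an incoming lane, ⊥ (not yet arrived),
or ⊤ (departed). -/
inductive LaneStatus (kin : ℕ) where
  | inLane (l : Fin kin)
  | notArrived
  | finished

/-- The minimal sensor reading: front, lane and intent. -/
structure Reading (kin kout : ℕ) where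
  front : Prop
  lane : LaneStatus kin
  intent : Fin kout

/-- Environment states record the adversary, the time, a queue for each incoming lane
and the set of departed agents. -/
structure EnvState (kin kout : ℕ) where
  adv : Adversary kin kout
  time : ℕ
  queue : Fin kin → List ℕ
  done : Set ℕ

/-- Local states: a memory state together with a sensor reading
(the minimal reading plus possibly extra sensor information). -/
abbrev LState (kin kout : ℕ) (Mem Extra : Type*) := Mem × Reading kin kout × Extra

/-- Global states: an environment state and local states for all agents. -/
abbrev GState (kin kout : ℕ) (Mem Extra : Type*) :=
  EnvState kin kout × (ℕ → LState kin kout Mem Extra)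

/-- A run. -/
abbrev Run (kin kout : ℕ) (Mem Extra : Type*) := ℕ → GState kin kout Mem Extra

/-- An action protocol maps each agent's local state to an action. -/
abbrev Prot (kin kout : ℕ) (Mem Extra : Type*) := ℕ → LState kin kout Mem Extra → Act

variable {kin kout : ℕ} {Mem Extra Msg : Type*}

/-- Agent `i` is at the front of some queue. -/
def isFront (e : EnvState kin kout) (i : ℕ) : Prop :=
  ∃ l : Fin kin, (e.queue l).head? = some i

/-- The (lane, position) of agent `i`, if it is in some queue. -/
def posAt (e : EnvState kin kout) (i : ℕ) : Option (Fin kin × ℕ) :=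
  if h : ∃ l : Fin kin, i ∈ e.queue l then some (h.choose, (e.queue h.choose).idxOf i)
  else none

/-- The intended departure lane of agent `i`, as given by the arrival schedule. -/
def intentOf (e : EnvState kin kout) (i : ℕ) : Fin kout := (e.adv.arrive i).2.2

/-- The move `(lane_i, intent_i)` of agent `i`, if it is in some queue. -/
def moveAt (e : EnvState kin kout) (i : ℕ) : Option (Move kin kout) :=
  (posAt e i).map (fun p => (p.1, intentOf e i))

/-- The minimal sensor reading of agent `i` in environment state `e`. -/
def minimalReading (e : EnvState kin kout) (i : ℕ) : Reading kin kout where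
  front := isFront e i
  lane :=
    if h : ∃ l : Fin kin, i ∈ e.queue l then LaneStatus.inLane h.choose
    else if i ∈ e.done then LaneStatus.finished else LaneStatus.notArrived
  intent := intentOf e i

/-- An information-exchange protocol: initial memories, extra sensor information,
a message function and a memory-update function. -/
structure IEP (kin kout : ℕ) (Mem Extra Msg : Type*) where
  initMem : ℕ → Mem
  extra : EnvState kin kout → ℕ → Extra
  msg : ℕ → LState kin kout Mem Extra → Act → Reading kin kout × Extra → Option Msg
  upd : ℕ → LState kin kout Mem Extra → Act → Set Msg → Mem

/-- One round of the system: agents act, queues are updated (dequeues for agents that go,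
enqueues for new arrivals), new sensor readings are taken, messages are broadcast and
received subject to the transmission environment and the failure functions, and memories
are updated. -/
def step (E : IEP kin kout Mem Extra Msg) (P : Prot kin kout Mem Extra)
    (g : GState kin kout Mem Extra) : GState kin kout Mem Extra :=
  let e := g.1
  let act : ℕ → Act := fun i => P i (g.2 i)
  let q' : Fin kin → List ℕ := fun l =>
    let q1 := match (e.queue l).head? with
      | some i => if act i = Act.go then (e.queue l).tail else e.queue l
      | none => e.queue l
    if h : ∃ i l', e.adv.arrive i = (e.time + 1, l, l') then q1 ++ [h.choose] else q1
  let done' : Set ℕ := e.done ∪ {i | isFront e i ∧ act i = Act.go}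
  let e' : EnvState kin kout := ⟨e.adv, e.time + 1, q', done'⟩
  let sens : ℕ → Reading kin kout × Extra := fun i => (minimalReading e' i, E.extra e' i)
  let rcv : ℕ → Set Msg := fun i =>
    if e.adv.Fr e.time i = true ∧ (posAt e' i).isSome = true then
      {m | ∃ j pj pi, E.msg j (g.2 j) (act j) (sens j) = some m ∧
            e.adv.Ft e.time j = true ∧
            posAt e' j = some pj ∧ posAt e' i = some pi ∧ (pj, pi) ∈ e.adv.T}
    else ∅
  (e', fun i => (E.upd i (g.2 i) (act i) (rcv i), sens i))

/-- An intersection context: an information-exchange protocol together with an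
adversary model. -/
structure Ctx (kin kout : ℕ) (Mem Extra Msg : Type*) where
  iep : IEP kin kout Mem Extra Msg
  adv : Set (Adversary kin kout)

/-- Initial global states: time 0, empty queues, no departed agents, an adversary
from the adversary model, and initial local states. -/
def Init (C : Ctx kin kout Mem Extra Msg) (g : GState kin kout Mem Extra) : Prop :=
  g.1.adv ∈ C.adv ∧ g.1.time = 0 ∧ (∀ l, g.1.queue l = []) ∧ g.1.done = ∅ ∧
  ∀ i, g.2 i = (C.iep.initMem i, minimalReading g.1 i, C.iep.extra g.1 i)

/-- The interpreted system `I_{γ,P}`: the set of runs of protocol `P` in context `γ`. -/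
def Runs (C : Ctx kin kout Mem Extra Msg) (P : Prot kin kout Mem Extra) :
    Set (Run kin kout Mem Extra) :=
  {r | Init C (r 0) ∧ ∀ m, r (m + 1) = step C.iep P (r m)}

/-- `front_i` holds at the point `(r,m)`. -/
def frontAt (r : Run kin kout Mem Extra) (m i : ℕ) : Prop := isFront (r m).1 i

/-- `going_i` abbreviates `front_i ∧ ◯¬front_i`. -/
def goingAt (r : Run kin kout Mem Extra) (m i : ℕ) : Prop :=
  frontAt r m i ∧ ¬ frontAt r (m + 1) i

/-- `GO(r,m)`: the set of agents that go through the intersection in round `m+1`. -/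
def GOs (r : Run kin kout Mem Extra) (m : ℕ) : Set ℕ := {i | goingAt r m i}

/-- Validity: an agent goes through the intersection only from the front of its queue. -/
def ValidityP (C : Ctx kin kout Mem Extra Msg) (P : Prot kin kout Mem Extra) : Prop :=
  ∀ r ∈ Runs C P, ∀ m i, goingAt r m i → frontAt r m i

/-- Safety: agents that go simultaneously have compatible moves. -/
def SafetyP (O : Move kin kout → Move kin kout → Prop)
    (C : Ctx kin kout Mem Extra Msg) (P : Prot kin kout Mem Extra) : Prop :=
  ∀ r ∈ Runs C P, ∀ m i j, i ≠ j → goingAt r m i → goingAt r m j →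
    ∀ mi mj, moveAt (r m).1 i = some mi → moveAt (r m).1 j = some mj → O mi mj

/-- Liveness: every agent at the front of a queue eventually goes. -/
def LivenessP (C : Ctx kin kout Mem Extra Msg) (P : Prot kin kout Mem Extra) : Prop :=
  ∀ r ∈ Runs C P, ∀ m i, frontAt r m i → ∃ m' ≥ m, goingAt r m' i

/-- An intersection protocol: an action protocol satisfying Validity, Safety and Liveness. -/
def IsIntersectionProtocol (O : Move kin kout → Move kin kout → Prop)
    (C : Ctx kin kout Mem Extra Msg) (P : Prot kin kout Mem Extra) : Prop :=
  ValidityP C P ∧ SafetyP O C P ∧ LivenessP C P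

/-- `safe-to-go_i` at `(r,m)`: `i` is at the front of its queue (position 0) and the moves
of the agents in `GO(r,m) ∪ {i}` are pairwise compatible. -/
def safeToGo (O : Move kin kout → Move kin kout → Prop)
    (r : Run kin kout Mem Extra) (m i : ℕ) : Prop :=
  (∃ p, posAt (r m).1 i = some p ∧ p.2 = 0) ∧
  ∀ j ∈ GOs r m ∪ {i}, ∀ k ∈ GOs r m ∪ {i}, j ≠ k →
    ∀ mj mk, moveAt (r m).1 j = some mj → moveAt (r m).1 k = some mk → O mj mk

/-- `P` has unnecessary waiting with respect to `γ`. -/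
def UnnecessaryWaiting (O : Move kin kout → Move kin kout → Prop)
    (C : Ctx kin kout Mem Extra Msg) (P : Prot kin kout Mem Extra) : Prop :=
  ∃ r ∈ Runs C P, ∃ m i, safeToGo O r m i ∧ i ∉ GOs r m

/-- The time at which agent `i` goes through the intersection in run `r` (∞ if never). -/
def gotime (r : Run kin kout Mem Extra) (i : ℕ) : ℕ∞ :=
  sInf {n : ℕ∞ | ∃ m : ℕ, goingAt r m i ∧ n = (m : ℕ∞)}

/-- `P` dominates `P'`: on all corresponding runs, every agent goes at least as early. -/
def Dominates (C : Ctx kin kout Mem Extra Msg) (P P' : Prot kin kout Mem Extra) : Prop :=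
  ∀ r ∈ Runs C P, ∀ r' ∈ Runs C P', r 0 = r' 0 → ∀ i, gotime r i ≤ gotime r' i

def StrictDominates (C : Ctx kin kout Mem Extra Msg) (P P' : Prot kin kout Mem Extra) : Prop :=
  Dominates C P P' ∧ ¬ Dominates C P' P

/-- `P` is optimal: no intersection protocol strictly dominates it. -/
def Optimal (O : Move kin kout → Move kin kout → Prop)
    (C : Ctx kin kout Mem Extra Msg) (P : Prot kin kout Mem Extra) : Prop :=
  ¬ ∃ P' : Prot kin kout Mem Extra,
      IsIntersectionProtocol O C P' ∧ StrictDominates C P' P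

/-- `P` lexicographically dominates `P'`. -/
def LexDominates (C : Ctx kin kout Mem Extra Msg) (P P' : Prot kin kout Mem Extra) : Prop :=
  ∀ r ∈ Runs C P, ∀ r' ∈ Runs C P', r 0 = r' 0 →
    (∀ m, GOs r m = GOs r' m) ∨
    ∃ m, (∀ k < m, GOs r k = GOs r' k) ∧ GOs r m ≠ GOs r' m ∧ GOs r' m ⊂ GOs r m

def StrictLexDominates (C : Ctx kin kout Mem Extra Msg) (P P' : Prot kin kout Mem Extra) :
    Prop :=
  LexDominates C P P' ∧ ¬ LexDominates C P' P

/-- `P` is lexicographically optimal: no intersection protocol strictly lexicographically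
dominates it. -/
def LexOptimal (O : Move kin kout → Move kin kout → Prop)
    (C : Ctx kin kout Mem Extra Msg) (P : Prot kin kout Mem Extra) : Prop :=
  ¬ ∃ P' : Prot kin kout Mem Extra,
      IsIntersectionProtocol O C P' ∧ StrictLexDominates C P' P

/-- Knowledge: `K_i φ` holds at `(r,m)` iff `φ` holds at all points of the system where
agent `i` has the same local state. -/
def Kn (S : Set (Run kin kout Mem Extra)) (i : ℕ)
    (φ : Run kin kout Mem Extra → ℕ → Prop) (r : Run kin kout Mem Extra) (m : ℕ) : Prop :=
  ∀ r' ∈ S, ∀ m', (r' m').2 i = (r m).2 i → φ r' m'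

/-- The adversary model has no failures. -/
def NoFailures (C : Ctx kin kout Mem Extra Msg) : Prop :=
  ∀ α ∈ C.adv, ∀ k i, α.Ft k i = true ∧ α.Fr k i = true

/-- Full information exchange: every agent broadcasts (an injective encoding of) its
entire local state in every round, and records every broadcast it receives. -/
def FullInfo (C : Ctx kin kout Mem Extra Msg) : Prop :=
  (∃ enc : LState kin kout Mem Extra → Msg, Function.Injective enc ∧
      ∀ i s a o, C.iep.msg i s a o = some (enc s)) ∧
  (∀ i s a, Function.Injective fun B : Set Msg => C.iep.upd i s a B)

/-- A sufficiently rich context: every agent that will be at the front of some lane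
broadcasts a message encoding its lane and intent, tagged as coming from the front;
no other message is tagged as a front message; and each agent records the
(lane, intent) pair of each front agent it hears from. -/
def SufficientlyRich (C : Ctx kin kout Mem Extra Msg) : Prop :=
  ∃ dec : Msg → Option (Move kin kout),
    (∀ i s a (o : Reading kin kout × Extra) (l : Fin kin),
        o.1.front → o.1.lane = LaneStatus.inLane l →
        ∃ msg, C.iep.msg i s a o = some msg ∧ dec msg = some (l, o.1.intent)) ∧
    (∀ i s a (o : Reading kin kout × Extra), ¬ o.1.front →
        ∀ msg, C.iep.msg i s a o = some msg → dec msg = none) ∧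
    (∃ rec : Mem → Set (Move kin kout),
        ∀ i s a B, rec (C.iep.upd i s a B) = {mv | ∃ msg ∈ B, dec msg = some mv})

/-- The set of agents at the front of a queue. -/
def FrontSet (e : EnvState kin kout) : Set ℕ := {i | isFront e i}

/-- `P` depends only on the agents at the front of their queues. -/
def DependsOnlyOnFront (C : Ctx kin kout Mem Extra Msg) (P : Prot kin kout Mem Extra) :
    Prop :=
  ∀ r ∈ Runs C P, ∀ r' ∈ Runs C P, ∀ m m' i,
    FrontSet (r m).1 = FrontSet (r' m').1 → P i ((r m).2 i) = P i ((r' m').2 i)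

/-- The choices of an adversary in a single round: arrivals, the transmission
environment and the failure values. -/
structure Choice (kin kout : ℕ) where
  arrivals : Set (ℕ × Fin kin × Fin kout)
  T : Set ((Fin kin × ℕ) × (Fin kin × ℕ))
  Ft : ℕ → Bool
  Fr : ℕ → Bool

/-- The choices of adversary `α` in round `m+1`. -/
def choiceAt (α : Adversary kin kout) (m : ℕ) : Choice kin kout where
  arrivals := {p | α.arrive p.1 = (m + 1, p.2.1, p.2.2)}
  T := α.T
  Ft := fun i => α.Ft m i
  Fr := fun i => α.Fr m i

/-- The adversary history `H(α,m) = ⟨α_0, …, α_{m-1}⟩`. -/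
def hist (α : Adversary kin kout) (m : ℕ) : List (Choice kin kout) :=
  (List.range m).map (choiceAt α)

/-- The adversary history of run `r` up to time `m`. -/
def histOf (r : Run kin kout Mem Extra) (m : ℕ) : List (Choice kin kout) :=
  hist (r 0).1.adv m

/-- An intersection policy: a map from adversary histories to sets of permitted moves. -/
abbrev Policy (kin kout : ℕ) := List (Choice kin kout) → Set (Move kin kout)

/-- The set `H_γ` of adversary histories of the context. -/
def Hists (C : Ctx kin kout Mem Extra Msg) : Set (List (Choice kin kout)) :=
  {h | ∃ α ∈ C.adv, ∃ m, h = hist α m}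

/-- A feasible infinite sequence of histories: one arising from a single adversary. -/
def Feasible (F : Set (Adversary kin kout)) (h : ℕ → List (Choice kin kout)) : Prop :=
  ∃ α ∈ F, ∀ m, h m = hist α m

/-- Conflict-freedom of an intersection policy. -/
def ConflictFree (O : Move kin kout → Move kin kout → Prop)
    (C : Ctx kin kout Mem Extra Msg) (σ : Policy kin kout) : Prop :=
  ∀ h ∈ Hists C, ∀ mv ∈ σ h, ∀ mv' ∈ σ h, mv ≠ mv' → O mv mv'

/-- Fairness of an intersection policy. -/
def FairPolicy (C : Ctx kin kout Mem Extra Msg) (σ : Policy kin kout) : Prop :=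
  ∀ h : ℕ → List (Choice kin kout), Feasible C.adv h →
    ∀ mv : Move kin kout, ∀ m, ∃ m' ≥ m, mv ∈ σ (h m')

/-- A correct intersection policy: conflict-free and fair. -/
def CorrectPolicy (O : Move kin kout → Move kin kout → Prop)
    (C : Ctx kin kout Mem Extra Msg) (σ : Policy kin kout) : Prop :=
  ConflictFree O C σ ∧ FairPolicy C σ

/-- A synchronous context: the time is encoded in each agent's local state. -/
def Synchronous (C : Ctx kin kout Mem Extra Msg) : Prop :=
  ∃ clock : LState kin kout Mem Extra → ℕ,
    ∀ P : Prot kin kout Mem Extra, ∀ r ∈ Runs C P, ∀ m i, clock ((r m).2 i) = m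

/-- The knowledge condition of the knowledge-based program `P^σ`:
`front_i ∧ (lane_i, intent_i) ∈ σ`. -/
def phiSigma (σ : Policy kin kout) (i : ℕ) (r : Run kin kout Mem Extra) (m : ℕ) : Prop :=
  frontAt r m i ∧ ∃ mv, moveAt (r m).1 i = some mv ∧ mv ∈ σ (histOf r m)

/-- `P` implements the knowledge-based program `if K_i φ_i then go else noop` in `γ`. -/
def Implements (C : Ctx kin kout Mem Extra Msg) (P : Prot kin kout Mem Extra)
    (φ : ℕ → Run kin kout Mem Extra → ℕ → Prop) : Prop :=
  ∀ r ∈ Runs C P, ∀ m i, (P i ((r m).2 i) = Act.go ↔ Kn (Runs C P) i (φ i) r m)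

/-- Behavioral equivalence: the protocols take the same actions at all reachable states. -/
def BehEq (C : Ctx kin kout Mem Extra Msg) (P P' : Prot kin kout Mem Extra) : Prop :=
  (∀ r ∈ Runs C P, ∀ m i, P i ((r m).2 i) = P' i ((r m).2 i)) ∧
  (∀ r ∈ Runs C P', ∀ m i, P i ((r m).2 i) = P' i ((r m).2 i))

/-- `γ` is `σ`-aware. -/
def SigmaAware (C : Ctx kin kout Mem Extra Msg) (σ : Policy kin kout) : Prop :=
  ∀ P : Prot kin kout Mem Extra, ∀ r ∈ Runs C P, ∀ m i (l : Fin kin) (l' : Fin kout),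
    (l, l') ∈ σ (histOf r m) → i ∈ (r m).1.queue l →
    Kn (Runs C P) i (fun r' m' => (l, l') ∈ σ (histOf r' m')) r m

/-- `γ` is `next`-aware. -/
def NextAware (C : Ctx kin kout Mem Extra Msg)
    (next : List (Choice kin kout) → Fin kin) : Prop :=
  ∀ P : Prot kin kout Mem Extra, ∀ r ∈ Runs C P, ∀ m i (l : Fin kin),
    next (histOf r m) = l →
    Kn (Runs C P) i (fun r' m' => next (histOf r' m') = l) r m

/-- Cyclic distance from `a` to `b` (mod `kin`). -/
def distC (a b : Fin kin) : ℕ := (b.val + kin - a.val) % kin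

/-- `l` lies in the cyclic interval `[a, b)` of incoming lanes. -/
def inCyc (a b l : Fin kin) : Prop := distC a l < distC a b

/-- `mv` is compatible with every move in `S`. -/
def compatAll (O : Move kin kout → Move kin kout → Prop)
    (S : Set (Move kin kout)) (mv : Move kin kout) : Prop :=
  ∀ mv' ∈ S, O mv mv'

/-- The proposition `V_i` of the knowledge-based program `𝐏`. -/
def Vprop (O : Move kin kout → Move kin kout → Prop) (σ : Policy kin kout)
    (next : List (Choice kin kout) → Fin kin) (i : ℕ)
    (r : Run kin kout Mem Extra) (m : ℕ) : Prop :=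
  ∃ mv, moveAt (r m).1 i = some mv ∧ mv ∉ σ (histOf r m) ∧
    (∀ j mj, goingAt r m j → moveAt (r m).1 j = some mj →
        mj ∈ σ (histOf r m) → O mv mj) ∧
    (∀ j mj, j ≠ i → goingAt r m j → moveAt (r m).1 j = some mj →
        mj ∉ σ (histOf r m) → inCyc (next (histOf r m)) mv.1 mj.1 → O mv mj)

/-- The knowledge condition of the knowledge-based program `𝐏`:
`front_i ∧ ((lane_i, intent_i) ∈ σ ∨ V_i)`. -/
def phiP (O : Move kin kout → Move kin kout → Prop) (σ : Policy kin kout)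
    (next : List (Choice kin kout) → Fin kin) (i : ℕ)
    (r : Run kin kout Mem Extra) (m : ℕ) : Prop :=
  frontAt r m i ∧
    ((∃ mv, moveAt (r m).1 i = some mv ∧ mv ∈ σ (histOf r m)) ∨ Vprop O σ next i r m)

/-- Fairness of a `next` function. -/
def FairNext (C : Ctx kin kout Mem Extra Msg)
    (next : List (Choice kin kout) → Fin kin) : Prop :=
  ∀ h : ℕ → List (Choice kin kout), Feasible C.adv h →
    ∀ m (l : Fin kin), ∃ m' ≥ m, next (h m') = l

/-- Fairness of a pair `(σ, next)`. -/
def PairFair (O : Move kin kout → Move kin kout → Prop)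
    (C : Ctx kin kout Mem Extra Msg) (σ : Policy kin kout)
    (next : List (Choice kin kout) → Fin kin) : Prop :=
  ∀ h : ℕ → List (Choice kin kout), Feasible C.adv h →
    ∀ m (mv : Move kin kout), ∃ m' ≥ m,
      mv ∈ σ (h m') ∨ (next (h m') = mv.1 ∧ compatAll O (σ (h m')) mv)

/-- `next(h) = |h| mod |L_in|` at time `t`. -/
def nextL (hkin : 0 < kin) (t : ℕ) : Fin kin := ⟨t % kin, Nat.mod_lt _ hkin⟩

/-- The stages of the construction of the set `Pos_i`, starting from the lane `nxt` and
proceeding in cyclic order; `M` is the set of moves received from front agents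
(empty when there is no communication). -/
def posStage (hkin : 0 < kin) (O : Move kin kout → Move kin kout → Prop)
    (M : Set (Move kin kout)) (nxt : Fin kin) : ℕ → Set (Move kin kout)
  | 0 => ∅
  | t + 1 =>
    let S := posStage hkin O M nxt t
    let l : Fin kin := ⟨(nxt.val + t) % kin, Nat.mod_lt _ hkin⟩
    if ∃ l' : Fin kout, (l, l') ∈ M then
      S ∪ {mv | mv.1 = l ∧ mv ∈ M ∧ compatAll O S mv}
    else
      S ∪ {mv | mv.1 = l ∧ compatAll O S mv}

/-- The set `Pos_i` computed from the received moves `M`, the lane `nxt = next` and the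
agent's own lane `lanei`. -/
def PosSet (hkin : 0 < kin) (O : Move kin kout → Move kin kout → Prop)
    (M : Set (Move kin kout)) (nxt lanei : Fin kin) : Set (Move kin kout) :=
  posStage hkin O M nxt (distC nxt lanei)

/-- The stage `Pos_i^l` of the construction of `Pos_i`, for a lane `l` in the cyclic
interval `[nxt, lane_i)`. -/
def PosUpTo (hkin : 0 < kin) (O : Move kin kout → Move kin kout → Prop)
    (M : Set (Move kin kout)) (nxt l : Fin kin) : Set (Move kin kout) :=
  posStage hkin O M nxt (distC nxt l + 1)

/-- The adversary model with no failures. -/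
def NFadv (kin kout : ℕ) : Set (Adversary kin kout) :=
  {α | ∀ k i, α.Ft k i = true ∧ α.Fr k i = true}

/-- The adversary model with crash failures. -/
def CRadv (kin kout : ℕ) : Set (Adversary kin kout) :=
  {α | (∀ k i, α.Fr k i = true) ∧
    ∀ k i, α.Ft k i = false → ∀ k', k < k' → α.Ft k' i = false}

/-- The adversary model with sending omissions. -/
def SOadv (kin kout : ℕ) : Set (Adversary kin kout) :=
  {α | ∀ k i, α.Fr k i = true}

/-- The information-exchange protocol of `γ_∅`: a single memory state, no messages,
and sensor readings `⟨front_i, lane_i, intent_i, time_i⟩`. -/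
def E0 (kin kout : ℕ) : IEP kin kout Unit ℕ Empty where
  initMem _ := ()
  extra e _ := e.time
  msg _ _ _ _ := none
  upd _ _ _ _ := ()

/-- The context `γ_∅(F)`. -/
def gammaEmpty (kin kout : ℕ) (F : Set (Adversary kin kout)) : Ctx kin kout Unit ℕ Empty :=
  ⟨E0 kin kout, F⟩

/-- The protocol `P^∅`: go iff at the front and own move compatible with `Pos_i`. -/
def Pempty (hkin : 0 < kin) (O : Move kin kout → Move kin kout → Prop) :
    Prot kin kout Unit ℕ := fun _ s =>
  match s.2.1.lane with
  | LaneStatus.inLane l =>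
      if s.2.1.front ∧ compatAll O (PosSet hkin O ∅ (nextL hkin s.2.2) l) (l, s.2.1.intent)
      then Act.go else Act.noop
  | _ => Act.noop

/-- The information-exchange protocol of `γ_intent`: exactly the agents at the front of a
lane broadcast `(lane_i, intent_i)`; the memory is the set of moves received in the
current round; sensor readings are `⟨front_i, lane_i, intent_i, time_i⟩`. -/
def Eintent (kin kout : ℕ) : IEP kin kout (Set (Move kin kout)) ℕ (Move kin kout) where
  initMem _ := ∅
  extra e _ := e.time
  msg _ _ _ o :=
    if o.1.front then
      match o.1.lane with
      | LaneStatus.inLane l => some (l, o.1.intent)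
      | _ => none
    else none
  upd _ _ _ B := B

/-- The context `γ_intent(F)`. -/
def gammaIntent (kin kout : ℕ) (F : Set (Adversary kin kout)) :
    Ctx kin kout (Set (Move kin kout)) ℕ (Move kin kout) :=
  ⟨Eintent kin kout, F⟩

/-- The protocol `P^intent`: go iff at the front and own move compatible with `Pos_i`
computed from the received moves. -/
def Pintent (hkin : 0 < kin) (O : Move kin kout → Move kin kout → Prop) :
    Prot kin kout (Set (Move kin kout)) ℕ := fun _ s =>
  match s.2.1.lane with
  | LaneStatus.inLane l =>
      if s.2.1.front ∧
          compatAll O (PosSet hkin O s.1 (nextL hkin s.2.2) l) (l, s.2.1.intent)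
      then Act.go else Act.noop
  | _ => Act.noop

end Inter

open Inter
namespace InterAux

open Inter

variable {kin kout : ℕ}

lemma distC_eq (a b : Fin kin) :
    distC a b = if a.val ≤ b.val then b.val - a.val else b.val + kin - a.val := by
  have ha := a.isLt; have hb := b.isLt
  unfold distC
  rcases le_or_gt a.val b.val with h | h
  · rw [if_pos h]
    have e : b.val + kin - a.val = (b.val - a.val) + kin := by omega
    rw [e, Nat.add_mod_right, Nat.mod_eq_of_lt (by omega)]
  · rw [if_neg (by omega)]
    exact Nat.mod_eq_of_lt (by omega)

lemma distC_lt (hkin : 0 < kin) (a b : Fin kin) : distC a b < kin :=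
  Nat.mod_lt _ hkin

lemma distC_self (a : Fin kin) : distC a a = 0 := by
  rw [distC_eq]; simp

lemma distC_inj (a b b' : Fin kin) (h : distC a b = distC a b') : b = b' := by
  have ha := a.isLt; have hb := b.isLt; have hb' := b'.isLt
  rw [distC_eq, distC_eq] at h
  apply Fin.ext
  split at h <;> split at h <;> omega

lemma distC_add (hkin : 0 < kin) (a : Fin kin) (s : ℕ) (hs : s < kin) :
    distC a ⟨(a.val + s) % kin, Nat.mod_lt _ hkin⟩ = s := by
  have ha := a.isLt
  show ((a.val + s) % kin + kin - a.val) % kin = s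
  rcases Nat.lt_or_ge (a.val + s) kin with h | h
  · rw [Nat.mod_eq_of_lt h]
    have e : a.val + s + kin - a.val = s + kin := by omega
    rw [e, Nat.add_mod_right, Nat.mod_eq_of_lt hs]
  · have h2 : (a.val + s) % kin = a.val + s - kin := by
      rw [Nat.mod_eq_sub_mod h, Nat.mod_eq_of_lt (by omega)]
    rw [h2]
    have e : a.val + s - kin + kin - a.val = s := by omega
    rw [e, Nat.mod_eq_of_lt hs]

lemma add_distC (hkin : 0 < kin) (a b : Fin kin) :
    (a.val + distC a b) % kin = b.val := by
  have ha := a.isLt; have hb := b.isLt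
  rw [distC_eq]
  rcases le_or_gt a.val b.val with h | h
  · rw [if_pos h]
    have e : a.val + (b.val - a.val) = b.val := by omega
    rw [e, Nat.mod_eq_of_lt hb]
  · rw [if_neg (by omega)]
    have e : a.val + (b.val + kin - a.val) = b.val + kin := by omega
    rw [e, Nat.add_mod_right, Nat.mod_eq_of_lt hb]

lemma posStage_mono (hkin : 0 < kin) (O : Move kin kout → Move kin kout → Prop)
    (M : Set (Move kin kout)) (nxt : Fin kin) {s t : ℕ} (h : s ≤ t) :
    posStage hkin O M nxt s ⊆ posStage hkin O M nxt t := by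
  induction t with
  | zero => simp_all
  | succ t ih =>
    rcases Nat.lt_or_ge s (t+1) with h1 | h1
    · refine (ih (by omega)).trans ?_
      rw [posStage]
      split <;> exact Set.subset_union_left
    · have : s = t + 1 := by omega
      subst this; rfl

lemma compatAll_mono (O : Move kin kout → Move kin kout → Prop)
    {S S' : Set (Move kin kout)} (h : S ⊆ S') {mv : Move kin kout}
    (hc : compatAll O S' mv) : compatAll O S mv :=
  fun x hx => hc x (h hx)

lemma posStage_empty_mem (hkin : 0 < kin) (O : Move kin kout → Move kin kout → Prop)
    (nxt : Fin kin) {t : ℕ} {mv : Move kin kout}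
    (h : mv ∈ posStage hkin O ∅ nxt t) :
    ∃ s < t, mv.1 = (⟨(nxt.val + s) % kin, Nat.mod_lt _ hkin⟩ : Fin kin) ∧
      compatAll O (posStage hkin O ∅ nxt s) mv := by
  induction t with
  | zero => simp [posStage] at h
  | succ t ih =>
    rw [posStage] at h
    simp only [Set.mem_empty_iff_false, exists_false, if_neg (by simp : ¬ False)] at h
    rcases h with h | h
    · obtain ⟨s, hs, h1, h2⟩ := ih h
      exact ⟨s, by omega, h1, h2⟩
    · exact ⟨t, by omega, h.1, h.2⟩

lemma posStage_empty_key (hkin : 0 < kin) (O : Move kin kout → Move kin kout → Prop)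
    (nxt : Fin kin) {t : ℕ} (ht : t ≤ kin) {mv : Move kin kout}
    (h : mv ∈ posStage hkin O ∅ nxt t) :
    distC nxt mv.1 < t ∧ compatAll O (posStage hkin O ∅ nxt (distC nxt mv.1)) mv := by
  obtain ⟨s, hs, h1, h2⟩ := posStage_empty_mem hkin O nxt h
  have hd : distC nxt mv.1 = s := by rw [h1]; exact distC_add hkin nxt s (by omega)
  rw [hd]
  exact ⟨by omega, h2⟩

/-- Core safety: two moves on distinct lanes, each compatible with its own `Pos` set. -/
lemma core_safety_aux (hkin : 0 < kin) {O : Move kin kout → Move kin kout → Prop}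
    (nxt : Fin kin) {mi mj : Move kin kout}
    (hlt : distC nxt mj.1 < distC nxt mi.1)
    (hi : compatAll O (PosSet hkin O ∅ nxt mi.1) mi)
    (hj : compatAll O (PosSet hkin O ∅ nxt mj.1) mj) : O mi mj := by
  have hmem : mj ∈ posStage hkin O ∅ nxt (distC nxt mj.1 + 1) := by
    rw [posStage]
    simp only [Set.mem_empty_iff_false, exists_false, if_neg (by simp : ¬ False)]
    right
    refine ⟨Fin.ext ?_, hj⟩
    show mj.1.val = (nxt.val + distC nxt mj.1) % kin
    rw [add_distC hkin]
  have : mj ∈ PosSet hkin O ∅ nxt mi.1 :=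
    posStage_mono hkin O ∅ nxt (by omega) hmem
  exact hi mj this

lemma core_safety (hkin : 0 < kin) {O : Move kin kout → Move kin kout → Prop}
    (hO : ∀ a b, O a b → O b a) (nxt : Fin kin) {mi mj : Move kin kout}
    (hne : mi.1 ≠ mj.1)
    (hi : compatAll O (PosSet hkin O ∅ nxt mi.1) mi)
    (hj : compatAll O (PosSet hkin O ∅ nxt mj.1) mj) : O mi mj := by
  rcases lt_trichotomy (distC nxt mj.1) (distC nxt mi.1) with h | h | h
  · exact core_safety_aux hkin nxt h hi hj
  · exact absurd (distC_inj nxt _ _ h) (fun e => hne e.symm)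
  · exact hO _ _ (core_safety_aux hkin nxt h hj hi)

end InterAux
namespace InterAux

open Inter

variable {kin kout : ℕ} {Mem Extra Msg : Type*}

lemma step_adv (E : IEP kin kout Mem Extra Msg) (P : Prot kin kout Mem Extra)
    (g : GState kin kout Mem Extra) : (step E P g).1.adv = g.1.adv := rfl

lemma step_time (E : IEP kin kout Mem Extra Msg) (P : Prot kin kout Mem Extra)
    (g : GState kin kout Mem Extra) : (step E P g).1.time = g.1.time + 1 := rfl

lemma step_queue (E : IEP kin kout Mem Extra Msg) (P : Prot kin kout Mem Extra)
    (g : GState kin kout Mem Extra) (l : Fin kin) :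
    (step E P g).1.queue l =
      (let q1 := match (g.1.queue l).head? with
        | some i => if P i (g.2 i) = Act.go then (g.1.queue l).tail else g.1.queue l
        | none => g.1.queue l
      if h : ∃ i l', g.1.adv.arrive i = (g.1.time + 1, l, l') then q1 ++ [h.choose]
      else q1) := rfl

lemma step_done (E : IEP kin kout Mem Extra Msg) (P : Prot kin kout Mem Extra)
    (g : GState kin kout Mem Extra) :
    (step E P g).1.done = g.1.done ∪ {i | isFront g.1 i ∧ P i (g.2 i) = Act.go} := rfl

lemma step_snd_E0 (P : Prot kin kout Unit ℕ) (g : GState kin kout Unit ℕ) (i : ℕ) :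
    (step (E0 kin kout) P g).2 i =
      ((), minimalReading (step (E0 kin kout) P g).1 i, g.1.time + 1) := rfl

section Runs

variable {F : Set (Adversary kin kout)} {P : Prot kin kout Unit ℕ}
  {r : Run kin kout Unit ℕ}

lemma r_succ (hr : r ∈ Runs (gammaEmpty kin kout F) P) (m : ℕ) :
    r (m + 1) = step (E0 kin kout) P (r m) := hr.2 m

lemma r_time (hr : r ∈ Runs (gammaEmpty kin kout F) P) (m : ℕ) :
    (r m).1.time = m := by
  induction m with
  | zero => exact hr.1.2.1
  | succ m ih => rw [r_succ hr, step_time, ih]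

lemma r_adv (hr : r ∈ Runs (gammaEmpty kin kout F) P) (m : ℕ) :
    (r m).1.adv = (r 0).1.adv := by
  induction m with
  | zero => rfl
  | succ m ih => rw [r_succ hr, step_adv, ih]

lemma r_local (hr : r ∈ Runs (gammaEmpty kin kout F) P) (m i : ℕ) :
    (r m).2 i = ((), minimalReading (r m).1 i, m) := by
  cases m with
  | zero =>
    have h := hr.1.2.2.2.2 i
    rw [h]
    have : (r 0).1.time = 0 := hr.1.2.1
    show ((), minimalReading (r 0).1 i, (r 0).1.time) = _
    rw [this]
  | succ m =>
    rw [r_succ hr, step_snd_E0, r_time hr m, ← r_succ hr]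

/-- Environment invariant: queued agents are at their arrival lane, have arrived,
and queues have no duplicates. -/
def EnvInv (e : EnvState kin kout) : Prop :=
  (∀ i l, i ∈ e.queue l → (e.adv.arrive i).2.1 = l ∧ (e.adv.arrive i).1 ≤ e.time) ∧
  ∀ l, (e.queue l).Nodup

lemma envInv_step {Mem' Extra' Msg' : Type*} (E : IEP kin kout Mem' Extra' Msg')
    (P' : Prot kin kout Mem' Extra') (g : GState kin kout Mem' Extra')
    (h : EnvInv g.1) : EnvInv (step E P' g).1 := by
  constructor
  · intro i l hi
    rw [step_queue] at hi
    simp only [step_adv, step_time]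
    set q1 := (match (g.1.queue l).head? with
      | some i => if P' i (g.2 i) = Act.go then (g.1.queue l).tail else g.1.queue l
      | none => g.1.queue l) with hq1
    have hq1sub : q1 ⊆ g.1.queue l := by
      rw [hq1]
      match hh : (g.1.queue l).head? with
      | some a =>
        simp only
        split
        · exact (List.tail_sublist _).subset
        · exact fun _ h => h
      | none => exact fun _ h => h
    have base : i ∈ q1 → (g.1.adv.arrive i).2.1 = l ∧ (g.1.adv.arrive i).1 ≤ g.1.time + 1 := by
      intro hmem
      obtain ⟨h1, h2⟩ := h.1 i l (hq1sub hmem)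
      exact ⟨h1, by omega⟩
    split at hi
    · rename_i hex
      rcases List.mem_append.1 hi with hmem | hmem
      · exact base hmem
      · simp only [List.mem_singleton] at hmem
        subst hmem
        obtain ⟨l', hl'⟩ := hex.choose_spec
        rw [hl']
        exact ⟨rfl, le_refl _⟩
    · exact base hi
  · intro l
    rw [step_queue]
    set q1 := (match (g.1.queue l).head? with
      | some i => if P' i (g.2 i) = Act.go then (g.1.queue l).tail else g.1.queue l
      | none => g.1.queue l) with hq1
    have hq1sub : q1 ⊆ g.1.queue l := by
      rw [hq1]
      match hh : (g.1.queue l).head? with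
      | some a =>
        simp only
        split
        · exact (List.tail_sublist _).subset
        · exact fun _ h => h
      | none => exact fun _ h => h
    have hq1nd : q1.Nodup := by
      rw [hq1]
      match hh : (g.1.queue l).head? with
      | some a =>
        simp only
        split
        · exact (h.2 l).sublist (List.tail_sublist _)
        · exact h.2 l
      | none => exact h.2 l
    split
    · rename_i hex
      rw [List.nodup_append]
      refine ⟨hq1nd, List.nodup_singleton _, ?_⟩
      intro a ha b hb hab
      simp only [List.mem_singleton] at hb
      subst hb
      subst hab
      obtain ⟨l', hl'⟩ := hex.choose_spec
      have := (h.1 _ l (hq1sub ha)).2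
      rw [hl'] at this
      omega
    · exact hq1nd

lemma r_inv (hr : r ∈ Runs (gammaEmpty kin kout F) P) (m : ℕ) : EnvInv (r m).1 := by
  induction m with
  | zero =>
    constructor
    · intro i l hi; rw [hr.1.2.2.1 l] at hi; exact absurd hi (List.not_mem_nil)
    · intro l; rw [hr.1.2.2.1 l]; exact List.nodup_nil
  | succ m ih => rw [r_succ hr]; exact envInv_step _ _ _ ih

end Runs

/-- From the invariant: an agent is in at most one queue. -/
lemma lane_unique {e : EnvState kin kout} (h : EnvInv e) {i : ℕ} {l l' : Fin kin}
    (h1 : i ∈ e.queue l) (h2 : i ∈ e.queue l') : l = l' := by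
  have ha := (h.1 i l h1).1
  have hb := (h.1 i l' h2).1
  rw [← ha, hb]

end InterAux
namespace InterAux

open Inter

variable {kin kout : ℕ}

lemma reading_ext {a b : Reading kin kout} (h1 : a.front ↔ b.front)
    (h2 : a.lane = b.lane) (h3 : a.intent = b.intent) : a = b := by
  cases a; cases b
  simp only at h1 h2 h3
  cases propext h1; cases h2; cases h3; rfl

lemma head_mem_queue {e : EnvState kin kout} {i : ℕ} {l : Fin kin}
    (h : (e.queue l).head? = some i) : i ∈ e.queue l := by
  cases hq : e.queue l with
  | nil => rw [hq] at h; exact absurd h (by simp)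
  | cons a t =>
    rw [hq] at h
    simp only [List.head?_cons, Option.some.injEq] at h
    rw [← h]; exact List.mem_cons_self

lemma exists_queue_of_front {e : EnvState kin kout} {i : ℕ} {l : Fin kin}
    (h : (e.queue l).head? = some i) : ∃ l' : Fin kin, i ∈ e.queue l' :=
  ⟨l, head_mem_queue h⟩

lemma choose_lane {e : EnvState kin kout} (hinv : EnvInv e) {i : ℕ} {l : Fin kin}
    (hmem : i ∈ e.queue l) (h : ∃ l' : Fin kin, i ∈ e.queue l') : h.choose = l :=
  lane_unique hinv h.choose_spec hmem

lemma posAt_front {e : EnvState kin kout} (hinv : EnvInv e) {i : ℕ} {l : Fin kin}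
    (h : (e.queue l).head? = some i) : posAt e i = some (l, 0) := by
  have hmem := head_mem_queue h
  have hex : ∃ l' : Fin kin, i ∈ e.queue l' := ⟨l, hmem⟩
  rw [posAt, dif_pos hex, choose_lane hinv hmem hex]
  cases hq : e.queue l with
  | nil => rw [hq] at h; exact absurd h (by simp)
  | cons a t =>
    rw [hq] at h
    simp only [List.head?_cons, Option.some.injEq] at h
    subst h
    rw [List.idxOf_cons_self]

lemma moveAt_front {e : EnvState kin kout} (hinv : EnvInv e) {i : ℕ} {l : Fin kin}
    (h : (e.queue l).head? = some i) : moveAt e i = some (l, intentOf e i) := by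
  rw [moveAt, posAt_front hinv h, Option.map_some]

lemma minimalReading_front {e : EnvState kin kout} (hinv : EnvInv e) {i : ℕ} {l : Fin kin}
    (h : (e.queue l).head? = some i) :
    minimalReading e i = ⟨True, LaneStatus.inLane l, intentOf e i⟩ := by
  have hmem := head_mem_queue h
  have hex : ∃ l' : Fin kin, i ∈ e.queue l' := ⟨l, hmem⟩
  apply reading_ext
  · simp only [minimalReading]
    exact iff_of_true ⟨l, h⟩ trivial
  · simp only [minimalReading]
    rw [dif_pos hex, choose_lane hinv hmem hex]
  · rfl

end InterAux
namespace InterAux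

open Inter

variable {kin kout : ℕ} {Mem Extra Msg : Type*}

/-- The dequeue part of the queue update. -/
def q1of (P : Prot kin kout Mem Extra) (g : GState kin kout Mem Extra) (l : Fin kin) :
    List ℕ :=
  match (g.1.queue l).head? with
  | some i => if P i (g.2 i) = Act.go then (g.1.queue l).tail else g.1.queue l
  | none => g.1.queue l

lemma step_queue' (E : IEP kin kout Mem Extra Msg) (P : Prot kin kout Mem Extra)
    (g : GState kin kout Mem Extra) (l : Fin kin) :
    (step E P g).1.queue l =
      if h : ∃ i l', g.1.adv.arrive i = (g.1.time + 1, l, l') then q1of P g l ++ [h.choose]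
      else q1of P g l := rfl

lemma q1of_subset (P : Prot kin kout Mem Extra) (g : GState kin kout Mem Extra)
    (l : Fin kin) : q1of P g l ⊆ g.1.queue l := by
  unfold q1of
  match hh : (g.1.queue l).head? with
  | some a =>
    simp only
    split
    · exact (List.tail_sublist _).subset
    · exact fun _ h => h
  | none => exact fun _ h => h

lemma q1of_stay (P : Prot kin kout Mem Extra) (g : GState kin kout Mem Extra)
    {l : Fin kin} {i : ℕ} (h : (g.1.queue l).head? = some i)
    (hng : P i (g.2 i) ≠ Act.go) : q1of P g l = g.1.queue l := by
  unfold q1of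
  rw [h]
  simp only [if_neg hng]

lemma q1of_go (P : Prot kin kout Mem Extra) (g : GState kin kout Mem Extra)
    {l : Fin kin} {i : ℕ} (h : (g.1.queue l).head? = some i)
    (hgo : P i (g.2 i) = Act.go) : q1of P g l = (g.1.queue l).tail := by
  unfold q1of
  rw [h]
  simp only [if_pos hgo]

/-- The freshly enqueued agent (if any) was not previously in any queue. -/
lemma new_arrival_not_mem {g : GState kin kout Mem Extra} (hinv : EnvInv g.1)
    {l : Fin kin} (hex : ∃ i l', g.1.adv.arrive i = (g.1.time + 1, l, l'))
    {l'' : Fin kin} : hex.choose ∉ g.1.queue l'' := by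
  intro hmem
  obtain ⟨l', hl'⟩ := hex.choose_spec
  have := (hinv.1 _ l'' hmem).2
  rw [hl'] at this
  simp at this

/-- If a front agent goes, it is in no queue afterwards. -/
lemma front_go_gone {E : IEP kin kout Mem Extra Msg} {P : Prot kin kout Mem Extra}
    {g : GState kin kout Mem Extra} (hinv : EnvInv g.1) {i : ℕ} {l : Fin kin}
    (h : (g.1.queue l).head? = some i) (hgo : P i (g.2 i) = Act.go) (l'' : Fin kin) :
    i ∉ (step E P g).1.queue l'' := by
  intro hmem
  rw [step_queue'] at hmem
  have hmemq1 : i ∉ q1of P g l'' := by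
    by_cases hll : l'' = l
    · subst hll
      rw [q1of_go P g h hgo]
      cases hq : g.1.queue l'' with
      | nil => simp [hq] at h
      | cons a t =>
        rw [hq] at h
        simp only [List.head?_cons, Option.some.injEq] at h
        subst h
        have hnd := hinv.2 l''
        rw [hq] at hnd
        simp only [List.tail_cons]
        exact (List.nodup_cons.1 hnd).1
    · intro hmem'
      have hm : i ∈ g.1.queue l'' := q1of_subset P g l'' hmem'
      exact hll (lane_unique hinv hm (head_mem_queue h))
  split at hmem
  · rcases List.mem_append.1 hmem with hx | hx
    · exact hmemq1 hx
    · simp only [List.mem_singleton] at hx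
      subst hx
      exact new_arrival_not_mem hinv _ (head_mem_queue h)
  · exact hmemq1 hmem

/-- If a front agent does not go, it remains at the front of the same queue. -/
lemma front_stay {E : IEP kin kout Mem Extra Msg} {P : Prot kin kout Mem Extra}
    {g : GState kin kout Mem Extra} {i : ℕ} {l : Fin kin}
    (h : (g.1.queue l).head? = some i) (hng : P i (g.2 i) ≠ Act.go) :
    ((step E P g).1.queue l).head? = some i := by
  rw [step_queue', q1of_stay P g h hng]
  obtain ⟨t, ht⟩ : ∃ t, g.1.queue l = i :: t := by
    cases hq : g.1.queue l with
    | nil => simp [hq] at h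
    | cons a t =>
      rw [hq] at h
      simp only [List.head?_cons, Option.some.injEq] at h
      exact ⟨t, by rw [h]⟩
  split
  · rw [ht]; rfl
  · exact h

lemma not_front_of_no_queue {e : EnvState kin kout} {i : ℕ}
    (h : ∀ l : Fin kin, i ∉ e.queue l) : ¬ isFront e i := by
  rintro ⟨l, hl⟩
  exact h l (head_mem_queue hl)

section Runs

variable {F : Set (Adversary kin kout)} {P : Prot kin kout Unit ℕ}
  {r : Run kin kout Unit ℕ}

/-- `going` iff front and the protocol says go. -/
lemma going_iff (hr : r ∈ Runs (gammaEmpty kin kout F) P) (m i : ℕ) :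
    goingAt r m i ↔ isFront (r m).1 i ∧ P i ((r m).2 i) = Act.go := by
  constructor
  · rintro ⟨hf, hnf⟩
    refine ⟨hf, ?_⟩
    by_contra hng
    obtain ⟨l, hl⟩ := hf
    apply hnf
    refine ⟨l, ?_⟩
    rw [r_succ hr]
    exact front_stay hl hng
  · rintro ⟨hf, hgo⟩
    obtain ⟨l, hl⟩ := hf
    refine ⟨⟨l, hl⟩, ?_⟩
    rintro ⟨l'', hl''⟩
    rw [r_succ hr] at hl''
    exact front_go_gone (r_inv hr m) hl hgo l'' (head_mem_queue hl'')

/-- Characterization of the `Pempty` action from a front state. -/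
lemma Pempty_go_iff (hkin : 0 < kin) (O : Move kin kout → Move kin kout → Prop)
    {e : EnvState kin kout} (hinv : EnvInv e) {i : ℕ} {l : Fin kin}
    (h : (e.queue l).head? = some i) (t : ℕ) :
    Pempty hkin O i ((), minimalReading e i, t) = Act.go ↔
      compatAll O (PosSet hkin O ∅ (nextL hkin t) l) (l, intentOf e i) := by
  rw [minimalReading_front hinv h]
  have he : Pempty hkin O i
        ((), (⟨True, LaneStatus.inLane l, intentOf e i⟩ : Reading kin kout), t)
      = if True ∧ compatAll O (PosSet hkin O ∅ (nextL hkin t) l) (l, intentOf e i)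
        then Act.go else Act.noop := by
    unfold Pempty
    dsimp only
    congr
  rw [he]
  by_cases hc : compatAll O (PosSet hkin O ∅ (nextL hkin t) l) (l, intentOf e i)
  · rw [if_pos ⟨trivial, hc⟩]
    exact iff_of_true rfl hc
  · rw [if_neg (fun hx => hc hx.2)]
    exact iff_of_false (fun hx => Act.noConfusion hx) hc

end Runs

end InterAux
namespace InterAux

open Inter

variable {kin kout : ℕ} {Mem Extra Msg : Type*}

lemma envext {e e' : EnvState kin kout} (h1 : e.adv = e'.adv) (h2 : e.time = e'.time)
    (h3 : e.queue = e'.queue) (h4 : e.done = e'.done) : e = e' := by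
  cases e; cases e'; simp_all

lemma step_env_congr {E E' : IEP kin kout Mem Extra Msg} {P P' : Prot kin kout Mem Extra}
    {g g' : GState kin kout Mem Extra} (he : g.1 = g'.1)
    (hq : ∀ l, q1of P g l = q1of P' g' l)
    (hd : ∀ i, (isFront g.1 i ∧ P i (g.2 i) = Act.go) ↔
      (isFront g'.1 i ∧ P' i (g'.2 i) = Act.go)) :
    (step E P g).1 = (step E' P' g').1 := by
  apply envext
  · rw [step_adv, step_adv, he]
  · rw [step_time, step_time, he]
  · funext l
    rw [step_queue', step_queue', hq l, he]
  · rw [step_done, step_done]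
    ext x
    simp only [Set.mem_union, Set.mem_setOf_eq]
    exact or_congr (by rw [he]) (hd x)

section Runs

variable {F : Set (Adversary kin kout)} {P P' : Prot kin kout Unit ℕ}
  {r r' : Run kin kout Unit ℕ}

lemma GOs_mem (hr : r ∈ Runs (gammaEmpty kin kout F) P) (m i : ℕ) :
    i ∈ GOs r m ↔ isFront (r m).1 i ∧
      P i ((), minimalReading (r m).1 i, m) = Act.go := by
  rw [← r_local hr]
  exact going_iff hr m i

lemma env_det (hr : r ∈ Runs (gammaEmpty kin kout F) P)
    (hr' : r' ∈ Runs (gammaEmpty kin kout F) P') (h0 : r 0 = r' 0) (m : ℕ)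
    (hGO : ∀ k < m, GOs r k = GOs r' k) : (r m).1 = (r' m).1 := by
  induction m with
  | zero => exact congrArg Prod.fst h0
  | succ m ih =>
    have he : (r m).1 = (r' m).1 := ih (fun k hk => hGO k (by omega))
    have hGOm : GOs r m = GOs r' m := hGO m (by omega)
    have hd : ∀ i, (isFront (r m).1 i ∧ P i ((r m).2 i) = Act.go) ↔
        (isFront (r' m).1 i ∧ P' i ((r' m).2 i) = Act.go) := by
      intro i
      rw [← going_iff hr m i, ← going_iff hr' m i]
      show i ∈ GOs r m ↔ i ∈ GOs r' m
      rw [hGOm]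
    have hq : ∀ l, q1of P (r m) l = q1of P' (r' m) l := by
      intro l
      unfold q1of
      rw [he]
      cases hh : ((r' m).1.queue l).head? with
      | none => rfl
      | some hd' =>
        dsimp only
        have hfr' : isFront (r' m).1 hd' := ⟨l, hh⟩
        have hfr : isFront (r m).1 hd' := by rw [he]; exact hfr'
        by_cases hgo : P hd' ((r m).2 hd') = Act.go
        · rw [if_pos hgo, if_pos (((hd hd').1 ⟨hfr, hgo⟩).2)]
        · rw [if_neg hgo, if_neg (fun hx => hgo ((hd hd').2 ⟨hfr', hx⟩).2)]
    rw [r_succ hr, r_succ hr']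
    exact step_env_congr he hq hd

end Runs

end InterAux
namespace InterAux

open Inter

variable {kin kout : ℕ}

section Props

variable (hkin : 0 < kin) (O : Move kin kout → Move kin kout → Prop)
  {F : Set (Adversary kin kout)} {r : Run kin kout Unit ℕ}

/-- A front agent that goes under `Pempty` has its move compatible with its `Pos` set. -/
lemma Pempty_going_compat (hr : r ∈ Runs (gammaEmpty kin kout F) (Pempty hkin O))
    {m i : ℕ} (hg : goingAt r m i) {l : Fin kin}
    (hl : ((r m).1.queue l).head? = some i) :
    compatAll O (PosSet hkin O ∅ (nextL hkin m) l) (l, intentOf (r m).1 i) := by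
  obtain ⟨hf, hgo⟩ := (going_iff hr m i).1 hg
  rw [r_local hr] at hgo
  exact (Pempty_go_iff hkin O (r_inv hr m) hl m).1 hgo

lemma Pempty_validity : ValidityP (gammaEmpty kin kout F) (Pempty hkin O) :=
  fun _ _ _ _ hg => hg.1

lemma Pempty_safety (hO : ∀ a b, O a b → O b a) :
    SafetyP O (gammaEmpty kin kout F) (Pempty hkin O) := by
  intro r hr m i j hij hgi hgj mi mj hmi hmj
  obtain ⟨li, hli⟩ := hgi.1
  obtain ⟨lj, hlj⟩ := hgj.1
  have hinv := r_inv hr m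
  rw [moveAt_front hinv hli] at hmi
  rw [moveAt_front hinv hlj] at hmj
  have hmi' : mi = (li, intentOf (r m).1 i) := (Option.some.injEq _ _ ▸ hmi).symm
  have hmj' : mj = (lj, intentOf (r m).1 j) := (Option.some.injEq _ _ ▸ hmj).symm
  have hlne : li ≠ lj := by
    intro h
    apply hij
    rw [h] at hli
    rw [hli] at hlj
    exact Option.some_inj.mp hlj
  have hci := Pempty_going_compat hkin O hr hgi hli
  have hcj := Pempty_going_compat hkin O hr hgj hlj
  subst hmi' hmj'
  exact core_safety hkin hO (nextL hkin m) hlne hci hcj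

lemma Pempty_liveness : LivenessP (gammaEmpty kin kout F) (Pempty hkin O) := by
  intro r hr m i hf
  obtain ⟨l, hl⟩ := hf
  set m' := kin * (m / kin) + kin + l.val with hm'def
  have hdm : kin * (m / kin) + m % kin = m := Nat.div_add_mod m kin
  have hmlt : m % kin < kin := Nat.mod_lt _ hkin
  have hge : m ≤ m' := by omega
  have hmod : m' % kin = l.val := by
    have e : m' = kin * (m / kin + 1) + l.val := by rw [hm'def]; ring
    rw [e, Nat.mul_add_mod, Nat.mod_eq_of_lt l.isLt]
  have claim : ∀ t, m + t ≤ m' →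
      (∃ s ≥ m, goingAt r s i) ∨ ((r (m + t)).1.queue l).head? = some i := by
    intro t
    induction t with
    | zero => intro _; right; exact hl
    | succ t ih =>
      intro hle
      rcases ih (by omega) with hdone | hhead
      · exact Or.inl hdone
      · by_cases hgo : Pempty hkin O i ((r (m + t)).2 i) = Act.go
        · left
          exact ⟨m + t, by omega, (going_iff hr (m + t) i).2 ⟨⟨l, hhead⟩, hgo⟩⟩
        · right
          have : m + (t + 1) = (m + t) + 1 := by omega
          rw [this, r_succ hr]
          exact front_stay hhead hgo
  rcases claim (m' - m) (by omega) with hdone | hhead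
  · exact hdone
  · have hmm : m + (m' - m) = m' := by omega
    rw [hmm] at hhead
    refine ⟨m', hge, (going_iff hr m' i).2 ⟨⟨l, hhead⟩, ?_⟩⟩
    rw [r_local hr]
    rw [Pempty_go_iff hkin O (r_inv hr m') hhead m']
    have hnext : nextL hkin m' = l := Fin.ext hmod
    rw [hnext]
    show compatAll O (posStage hkin O ∅ l (distC l l)) _
    rw [distC_self]
    exact fun mv hmv => absurd hmv (Set.notMem_empty mv)

lemma Pempty_is_intersection (hO : ∀ a b, O a b → O b a) :
    IsIntersectionProtocol O (gammaEmpty kin kout F) (Pempty hkin O) :=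
  ⟨Pempty_validity hkin O, Pempty_safety hkin O hO, Pempty_liveness hkin O⟩

end Props

end InterAux
namespace InterAux

open Inter

variable {kin kout : ℕ}

/-- The adversary used in the optimality argument: agent `i` arrives at time `m` on lane
`li` with intent `ii`, agent `i+1` arrives at time `m` on lane `lj` with intent `ij`,
and all other agents arrive later, pairwise at distinct times; no failures. -/
def advStar (m i : ℕ) (li lj : Fin kin) (ii ij : Fin kout) (hne : li ≠ lj) :
    Adversary kin kout where
  arrive k := if k = i then (m, li, ii) else if k = i + 1 then (m, lj, ij)
    else (m + 1 + k, li, ii)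
  conflictFree := by
    intro a b hab h
    beta_reduce at h ⊢
    by_cases ha1 : a = i
    · subst ha1
      rw [if_pos rfl] at h ⊢
      by_cases hb1 : b = a
      · exact absurd hb1.symm hab
      · rw [if_neg hb1] at h ⊢
        by_cases hb2 : b = a + 1
        · rw [if_pos hb2] at h ⊢
          exact hne
        · rw [if_neg hb2] at h
          simp only at h
          omega
    · rw [if_neg ha1] at h ⊢
      by_cases ha2 : a = i + 1
      · rw [if_pos ha2] at h ⊢
        by_cases hb1 : b = i
        · rw [if_pos hb1] at h ⊢
          exact Ne.symm hne
        · rw [if_neg hb1] at h ⊢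
          by_cases hb2 : b = i + 1
          · exact absurd (ha2.trans hb2.symm) hab
          · rw [if_neg hb2] at h
            simp only at h
            omega
      · rw [if_neg ha2] at h ⊢
        by_cases hb1 : b = i
        · rw [if_pos hb1] at h
          simp only at h
          omega
        · rw [if_neg hb1] at h ⊢
          by_cases hb2 : b = i + 1
          · rw [if_pos hb2] at h
            simp only at h
            omega
          · rw [if_neg hb2] at h
            simp only at h
            omega
  T := Set.univ
  T_front := fun _ _ => trivial
  Ft := fun _ _ => true
  Fr := fun _ _ => true

section AdvStar

variable {m i : ℕ} {li lj : Fin kin} {ii ij : Fin kout} {hne : li ≠ lj}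

lemma advStar_arrive_i : (advStar m i li lj ii ij hne).arrive i = (m, li, ii) := by
  simp [advStar]

lemma advStar_arrive_j : (advStar m i li lj ii ij hne).arrive (i + 1) = (m, lj, ij) := by
  simp [advStar]

lemma advStar_arrive_other {k : ℕ} (h1 : k ≠ i) (h2 : k ≠ i + 1) :
    (advStar m i li lj ii ij hne).arrive k = (m + 1 + k, li, ii) := by
  simp [advStar, h1, h2]

end AdvStar

/-- The initial global state for adversary `α`. -/
def gInit (α : Adversary kin kout) : GState kin kout Unit ℕ :=
  (⟨α, 0, fun _ => [], ∅⟩,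
    fun i => ((), minimalReading ⟨α, 0, fun _ => [], ∅⟩ i, 0))

/-- The run of protocol `P` against adversary `α` from the initial state. -/
def runOf (P : Prot kin kout Unit ℕ) (α : Adversary kin kout) : Run kin kout Unit ℕ :=
  fun n => (step (E0 kin kout) P)^[n] (gInit α)

lemma runOf_zero (P : Prot kin kout Unit ℕ) (α : Adversary kin kout) :
    runOf P α 0 = gInit α := rfl

lemma runOf_succ (P : Prot kin kout Unit ℕ) (α : Adversary kin kout) (n : ℕ) :
    runOf P α (n + 1) = step (E0 kin kout) P (runOf P α n) :=
  Function.iterate_succ_apply' _ _ _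

lemma runOf_mem {F : Set (Adversary kin kout)} (P : Prot kin kout Unit ℕ)
    {α : Adversary kin kout} (hα : α ∈ F) :
    runOf P α ∈ Runs (gammaEmpty kin kout F) P :=
  ⟨⟨hα, rfl, fun _ => rfl, rfl, fun _ => rfl⟩, runOf_succ P α⟩

lemma runOf_time (P : Prot kin kout Unit ℕ) (α : Adversary kin kout) (n : ℕ) :
    (runOf P α n).1.time = n := by
  induction n with
  | zero => rfl
  | succ n ih => rw [runOf_succ, step_time, ih]

lemma runOf_adv (P : Prot kin kout Unit ℕ) (α : Adversary kin kout) (n : ℕ) :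
    (runOf P α n).1.adv = α := by
  induction n with
  | zero => rfl
  | succ n ih => rw [runOf_succ, step_adv, ih]

lemma q1of_nil {Mem Extra : Type*} (P : Prot kin kout Mem Extra)
    (g : GState kin kout Mem Extra) {l : Fin kin} (h : g.1.queue l = []) :
    q1of P g l = [] := by
  unfold q1of
  rw [h]
  rfl

section RunOfStar

variable (P : Prot kin kout Unit ℕ) (m i : ℕ) (li lj : Fin kin) (ii ij : Fin kout)
  (hne : li ≠ lj)

lemma runOf_queue_lt (n : ℕ) (hn : n < m) (l : Fin kin) :
    (runOf P (advStar m i li lj ii ij hne) n).1.queue l = [] := by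
  induction n with
  | zero => rfl
  | succ n ih =>
    rw [runOf_succ, step_queue', q1of_nil P _ (ih (by omega))]
    rw [dif_neg]
    rintro ⟨k, l', hk⟩
    rw [runOf_time, runOf_adv] at hk
    by_cases h1 : k = i
    · subst h1; rw [advStar_arrive_i] at hk
      have := congrArg Prod.fst hk
      simp at this; omega
    · by_cases h2 : k = i + 1
      · subst h2; rw [advStar_arrive_j] at hk
        have := congrArg Prod.fst hk
        simp at this; omega
      · rw [advStar_arrive_other h1 h2] at hk
        have := congrArg Prod.fst hk
        simp at this; omega

lemma runOf_queue_m (hm : 1 ≤ m) (l : Fin kin) :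
    (runOf P (advStar m i li lj ii ij hne) m).1.queue l =
      if l = li then [i] else if l = lj then [i + 1] else [] := by
  obtain ⟨n, rfl⟩ : ∃ n, m = n + 1 := ⟨m - 1, by omega⟩
  rw [runOf_succ, step_queue',
    q1of_nil P _ (runOf_queue_lt P (n+1) i li lj ii ij hne n (by omega) l)]
  rw [runOf_time, runOf_adv]
  by_cases h1 : l = li
  · subst h1
    rw [dif_pos ⟨i, ii, advStar_arrive_i⟩, if_pos rfl]
    have hch : (⟨i, ii, advStar_arrive_i⟩ :
        ∃ (k : ℕ) (l' : Fin kout), (advStar (n+1) i l lj ii ij hne).arrive k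
          = (n + 1, l, l')).choose = i := by
      set hex : ∃ (k : ℕ) (l' : Fin kout), (advStar (n+1) i l lj ii ij hne).arrive k
          = (n + 1, l, l') := ⟨i, ii, advStar_arrive_i⟩ with hexd
      obtain ⟨l', hl'⟩ := hex.choose_spec
      by_cases hc1 : hex.choose = i
      · exact hc1
      · by_cases hc2 : hex.choose = i + 1
        · rw [hc2, advStar_arrive_j] at hl'
          have h2 := congrArg (fun p => p.2.1) hl'
          simp at h2
          exact absurd h2.symm hne
        · rw [advStar_arrive_other hc1 hc2] at hl'
          have := congrArg Prod.fst hl'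
          simp at this; omega
    rw [hch]
    rfl
  · by_cases h2 : l = lj
    · subst h2
      rw [dif_pos ⟨i + 1, ij, advStar_arrive_j⟩, if_neg h1, if_pos rfl]
      have hch : (⟨i + 1, ij, advStar_arrive_j⟩ :
          ∃ (k : ℕ) (l' : Fin kout), (advStar (n+1) i li l ii ij hne).arrive k
            = (n + 1, l, l')).choose = i + 1 := by
        set hex : ∃ (k : ℕ) (l' : Fin kout), (advStar (n+1) i li l ii ij hne).arrive k
            = (n + 1, l, l') := ⟨i + 1, ij, advStar_arrive_j⟩ with hexd
        obtain ⟨l', hl'⟩ := hex.choose_spec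
        by_cases hc2 : hex.choose = i + 1
        · exact hc2
        · by_cases hc1 : hex.choose = i
          · rw [hc1, advStar_arrive_i] at hl'
            have h2 := congrArg (fun p => p.2.1) hl'
            simp at h2
            exact absurd h2.symm (Ne.symm hne)
          · rw [advStar_arrive_other hc1 hc2] at hl'
            have := congrArg Prod.fst hl'
            simp at this; omega
      rw [hch]
      rfl
    · rw [dif_neg, if_neg h1, if_neg h2]
      rintro ⟨k, l', hk⟩
      by_cases hc1 : k = i
      · subst hc1; rw [advStar_arrive_i] at hk
        have := congrArg (fun p => p.2.1) hk
        simp at this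
        exact h1 this.symm
      · by_cases hc2 : k = i + 1
        · subst hc2; rw [advStar_arrive_j] at hk
          have := congrArg (fun p => p.2.1) hk
          simp at this
          exact h2 this.symm
        · rw [advStar_arrive_other hc1 hc2] at hk
          have := congrArg Prod.fst hk
          simp at this; omega

end RunOfStar

end InterAux
namespace InterAux

open Inter

variable {kin kout : ℕ}

lemma GOs_runOf_empty_lt (P : Prot kin kout Unit ℕ) {F : Set (Adversary kin kout)}
    {m i : ℕ} {li lj : Fin kin} {ii ij : Fin kout} {hne : li ≠ lj}
    (hα : advStar m i li lj ii ij hne ∈ F) {k : ℕ} (hk : k < m) :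
    GOs (runOf P (advStar m i li lj ii ij hne)) k = ∅ := by
  ext x
  simp only [Set.mem_empty_iff_false, iff_false]
  intro hx
  obtain ⟨l, hl⟩ := hx.1
  rw [runOf_queue_lt P m i li lj ii ij hne k hk l] at hl
  simp at hl

lemma GOs_zero {F : Set (Adversary kin kout)} {P : Prot kin kout Unit ℕ}
    {r : Run kin kout Unit ℕ} (hr : r ∈ Runs (gammaEmpty kin kout F) P) :
    GOs r 0 = ∅ := by
  ext x
  simp only [Set.mem_empty_iff_false, iff_false]
  intro hx
  obtain ⟨l, hl⟩ := hx.1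
  rw [hr.1.2.2.1 l] at hl
  simp at hl

variable (hkin : 0 < kin) {O : Move kin kout → Move kin kout → Prop}

/-- Main step: if a safe protocol `P'` lexicographically dominates `P^∅` and two
corresponding runs agree on their GO sets before time `m`, they agree at `m` too. -/
lemma lex_step {F : Set (Adversary kin kout)}
    (hFall : ∀ (m i : ℕ) (a b : Fin kin) (c d : Fin kout) (h : a ≠ b),
      advStar m i a b c d h ∈ F)
    {P' : Prot kin kout Unit ℕ}
    (hsafe : SafetyP O (gammaEmpty kin kout F) P')
    (hLD : LexDominates (gammaEmpty kin kout F) P' (Pempty hkin O))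
    {r' r : Run kin kout Unit ℕ}
    (hr' : r' ∈ Runs (gammaEmpty kin kout F) P')
    (hr : r ∈ Runs (gammaEmpty kin kout F) (Pempty hkin O))
    (h0 : r' 0 = r 0) (m : ℕ)
    (hbefore : ∀ k < m, GOs r' k = GOs r k) : GOs r' m = GOs r m := by
  by_contra hneq
  have henv : (r' m).1 = (r m).1 := env_det hr' hr h0 m hbefore
  -- pin down the first difference from lexicographic domination
  have hsub : GOs r m ⊂ GOs r' m := by
    rcases hLD r' hr' r hr h0 with hall | ⟨m₀, heq₀, hne₀, hsub₀⟩
    · exact absurd (hall m) hneq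
    · rcases lt_trichotomy m₀ m with hc | hc | hc
      · exact absurd (hbefore m₀ hc) hne₀
      · rw [← hc]; exact hsub₀
      · exact absurd (heq₀ m hc) hneq
  obtain ⟨i, hiIn, hiOut⟩ := Set.exists_of_ssubset hsub
  have hm : 1 ≤ m := by
    rcases Nat.eq_zero_or_pos m with h | h
    · subst h
      rw [GOs_zero hr'] at hiIn
      exact absurd hiIn (Set.notMem_empty i)
    · exact h
  obtain ⟨li, hli⟩ := hiIn.1
  have hli' : ((r m).1.queue li).head? = some i := by rw [← henv]; exact hli
  have hgo' : P' i ((), minimalReading (r' m).1 i, m) = Act.go :=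
    ((GOs_mem hr' m i).1 hiIn).2
  set ii := intentOf (r m).1 i with hii
  have hii' : intentOf (r' m).1 i = ii := by rw [henv]
  have hncompat : ¬ compatAll O (PosSet hkin O ∅ (nextL hkin m) li) (li, ii) := by
    intro hc
    apply hiOut
    rw [GOs_mem hr m i]
    exact ⟨⟨li, hli'⟩, (Pempty_go_iff hkin O (r_inv hr m) hli' m).2 hc⟩
  simp only [compatAll, not_forall] at hncompat
  obtain ⟨mv, hmvS, hnO⟩ := hncompat
  have hkey := posStage_empty_key hkin O (nextL hkin m)
    (le_of_lt (distC_lt hkin (nextL hkin m) li)) hmvS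
  have hlij : li ≠ mv.1 := by
    intro h
    rw [← h] at hkey
    exact absurd hkey.1 (lt_irrefl _)
  set α := advStar m i li mv.1 ii mv.2 hlij with hα
  have hαF : α ∈ F := hFall m i li mv.1 ii mv.2 hlij
  set r₂ := runOf P' α with hr₂def
  set r₂' := runOf (Pempty hkin O) α with hr₂'def
  have hr₂ : r₂ ∈ Runs (gammaEmpty kin kout F) P' := runOf_mem P' hαF
  have hr₂' : r₂' ∈ Runs (gammaEmpty kin kout F) (Pempty hkin O) :=
    runOf_mem (Pempty hkin O) hαF
  -- queue shapes at time m
  have hq2 : ∀ P : Prot kin kout Unit ℕ, ((runOf P α m).1.queue li).head? = some i := by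
    intro P
    rw [hα, runOf_queue_m P m i li mv.1 ii mv.2 hlij hm li, if_pos rfl]
    rfl
  have hq2j : ∀ P : Prot kin kout Unit ℕ,
      ((runOf P α m).1.queue mv.1).head? = some (i + 1) := by
    intro P
    rw [hα, runOf_queue_m P m i li mv.1 ii mv.2 hlij hm mv.1,
      if_neg (Ne.symm hlij), if_pos rfl]
    rfl
  have hadv2 : ∀ (P : Prot kin kout Unit ℕ) (n : ℕ), (runOf P α n).1.adv = α :=
    fun P n => runOf_adv P α n
  have hint_i : ∀ P : Prot kin kout Unit ℕ, intentOf (runOf P α m).1 i = ii := by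
    intro P
    show ((runOf P α m).1.adv.arrive i).2.2 = ii
    rw [hadv2 P m, hα, advStar_arrive_i]
  have hint_j : ∀ P : Prot kin kout Unit ℕ,
      intentOf (runOf P α m).1 (i + 1) = mv.2 := by
    intro P
    show ((runOf P α m).1.adv.arrive (i + 1)).2.2 = mv.2
    rw [hadv2 P m, hα, advStar_arrive_j]
  -- agent i goes under P' in the constructed run
  have hread : minimalReading (r₂ m).1 i = minimalReading (r' m).1 i := by
    rw [minimalReading_front (r_inv hr₂ m) (hq2 P'),
      minimalReading_front (r_inv hr' m) hli, hint_i P', hii']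
  have hi₂ : i ∈ GOs r₂ m := by
    rw [GOs_mem hr₂ m i]
    refine ⟨⟨li, hq2 P'⟩, ?_⟩
    rw [hread]
    exact hgo'
  -- agent i does not go under `Pempty` in the constructed run
  have hi_not₂' : i ∉ GOs r₂' m := by
    rw [GOs_mem hr₂' m i]
    rintro ⟨-, hgo⟩
    rw [Pempty_go_iff hkin O (r_inv hr₂' m) (hq2 (Pempty hkin O)) m,
      hint_i (Pempty hkin O)] at hgo
    exact hnO (hgo mv hmvS)
  -- agent i+1 goes under `Pempty` in the constructed run
  have hj₂' : i + 1 ∈ GOs r₂' m := by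
    rw [GOs_mem hr₂' m (i + 1)]
    refine ⟨⟨mv.1, hq2j (Pempty hkin O)⟩, ?_⟩
    rw [Pempty_go_iff hkin O (r_inv hr₂' m) (hq2j (Pempty hkin O)) m,
      hint_j (Pempty hkin O)]
    show compatAll O (posStage hkin O ∅ (nextL hkin m) (distC (nextL hkin m) mv.1))
      (mv.1, mv.2)
    rw [Prod.mk.eta]
    exact hkey.2
  -- by lexicographic domination, i+1 also goes under P'
  have hj₂ : i + 1 ∈ GOs r₂ m := by
    rcases hLD r₂ hr₂ r₂' hr₂' rfl with hall | ⟨m₁, heq₁, hne₁, hsub₁⟩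
    · rw [hall m]; exact hj₂'
    · rcases lt_trichotomy m₁ m with hc | hc | hc
      · rw [GOs_runOf_empty_lt P' hαF hc, GOs_runOf_empty_lt (Pempty hkin O) hαF hc]
          at hne₁
        exact absurd rfl hne₁
      · subst hc
        exact hsub₁.1 hj₂'
      · have := heq₁ m hc
        rw [this] at hi₂
        exact absurd hi₂ hi_not₂'
  -- safety of P' is violated
  have hmove_i : moveAt (r₂ m).1 i = some (li, ii) := by
    rw [moveAt_front (r_inv hr₂ m) (hq2 P'), hint_i P']
  have hmove_j : moveAt (r₂ m).1 (i + 1) = some mv := by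
    rw [moveAt_front (r_inv hr₂ m) (hq2j P'), hint_j P', Prod.mk.eta]
  exact hnO (hsafe r₂ hr₂ m i (i + 1) (by omega) hi₂ hj₂ (li, ii) mv hmove_i hmove_j)

/-- `Pempty` is lexicographically optimal provided all `advStar` adversaries belong
to the adversary model. -/
lemma Pempty_lex_optimal {F : Set (Adversary kin kout)}
    (hO : ∀ a b, O a b → O b a)
    (hFall : ∀ (m i : ℕ) (a b : Fin kin) (c d : Fin kout) (h : a ≠ b),
      advStar m i a b c d h ∈ F) :
    LexOptimal O (gammaEmpty kin kout F) (Pempty hkin O) := by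
  rintro ⟨P', hIP, hLD, hNLD⟩
  apply hNLD
  intro r hr r' hr' h0
  left
  intro m
  induction m using Nat.strong_induction_on with
  | _ m ih =>
    exact (lex_step hkin hFall hIP.2.1 hLD hr' hr h0.symm m
      (fun k hk => (ih k hk).symm)).symm

end InterAux

/-- `P^∅` is an intersection protocol (Validity, Safety, Liveness) and is
lexicographically optimal with respect to `γ_∅(F)` for each `F ∈ {NF, CR, SO}`. -/
theorem Pempty_intersection_protocol_and_lex_optimal
    {kin kout : ℕ} (hkin : 0 < kin)
    (O : Move kin kout → Move kin kout → Prop)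
    (hO : ∀ a b, O a b → O b a) :
    ∀ F ∈ ({NFadv kin kout, CRadv kin kout, SOadv kin kout} :
        Set (Set (Adversary kin kout))),
      IsIntersectionProtocol O (gammaEmpty kin kout F) (Pempty hkin O) ∧
      LexOptimal O (gammaEmpty kin kout F) (Pempty hkin O) := by
  intro F hF
  have hFall : ∀ (m i : ℕ) (a b : Fin kin) (c d : Fin kout) (h : a ≠ b),
      InterAux.advStar m i a b c d h ∈ F := by
    simp only [Set.mem_insert_iff, Set.mem_singleton_iff] at hF
    rcases hF with rfl | rfl | rfl
    · exact fun m i a b c d h k j => ⟨rfl, rfl⟩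
    · refine fun m i a b c d h => ⟨fun k j => rfl, fun k j hk k' _ => ?_⟩
      exact absurd hk (by simp [InterAux.advStar])
    · exact fun m i a b c d h k j => rfl
  exact ⟨InterAux.Pempty_is_intersection hkin O hO,
    InterAux.Pempty_lex_optimal hkin hO hFall⟩
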